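/- Let m ≥ 1 be an integer, R > 0, and ζ = exp(2πi/m). Let Ψ_D : ℂ → ℂ be holomorphic on {z ∈ ℂ : |z| > R}, satisfy Ψ_D(ζz) = ζΨ_D(z) for all |z| > R, and satisfy |Ψ_D(z)| → ∞ as |z| → ∞; let Ψ_Ω : ℂ → ℂ be holomorphic on {w ∈ ℂ : |w| > R^m}, and suppose Ψ_D(z)^m = Ψ_Ω(z^m) for all |z| > R. Let n ≥ 1 be an integer. Suppose F_D is a complex polynomial and (c^D_k)_{k≥1} are complex numbers such that for every z with |z| > R the series Σ_{k≥1} c^D_k z^{−k} converges unconditionally (HasSum) with sum F_D(Ψ_D(z)) − z^{mn}, and suppose F_Ω is a complex polynomial and (c^Ω_k)_{k≥1} are complex numbers such that for every w with |w| > R^m the series Σ_{k≥1} c^Ω_k w^{−k} converges unconditionally with sum F_Ω(Ψ_Ω(w)) − w^{n}. Then c^D_{mk} = c^Ω_k for every k ≥ 1. -/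

import Mathlib

open Filter

private lemma bound_of_hasSum' {f : ℕ → ℂ} {a : ℂ} (h : HasSum f a) :
    ∃ C : ℝ, 0 ≤ C ∧ ∀ k, ‖f k‖ ≤ C := by
  have h0 : Tendsto (fun k => ‖f k‖) atTop (nhds 0) := by
    simpa using h.summable.tendsto_atTop_zero.norm
  obtain ⟨C, hC⟩ := h0.bddAbove_range
  exact ⟨C, le_trans (norm_nonneg (f 0)) (hC (Set.mem_range_self 0)),
    fun k => hC (Set.mem_range_self k)⟩

private lemma tail_tendsto_zero' {c : ℕ → ℂ} {r : ℝ} (hr : 0 < r) (G : ℂ → ℂ)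
    (h : ∀ z : ℂ, r < ‖z‖ → HasSum (fun k : ℕ => c (k + 1) / z ^ (k + 1)) (G z)) :
    Tendsto G (comap norm atTop) (nhds 0) := by
  have hz0 : r < ‖((2 * r : ℝ) : ℂ)‖ := by
    rw [Complex.norm_real, Real.norm_eq_abs, abs_of_pos (by linarith)]
    linarith
  obtain ⟨C, hC0, hC⟩ := bound_of_hasSum' (h _ hz0)
  have hc : ∀ k : ℕ, ‖c (k + 1)‖ ≤ C * (2 * r) ^ (k + 1) := by
    intro k
    have h1 := hC k
    have hn2r : ‖((2 * r : ℝ) : ℂ)‖ = 2 * r := by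
      rw [Complex.norm_real, Real.norm_eq_abs, abs_of_pos (by linarith)]
    rw [norm_div, norm_pow, hn2r, div_le_iff₀ (by positivity)] at h1
    linarith
  have hev : ∀ᶠ z : ℂ in comap norm atTop, 4 * r ≤ ‖z‖ :=
    tendsto_comap.eventually (eventually_ge_atTop (4 * r))
  have hGlim : Tendsto (fun z : ℂ => 4 * C * r * ‖z‖⁻¹) (comap norm atTop) (nhds 0) := by
    have h2 : Tendsto (fun z : ℂ => ‖z‖⁻¹) (comap norm atTop) (nhds 0) :=
      tendsto_inv_atTop_zero.comp tendsto_comap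
    simpa using h2.const_mul (4 * C * r)
  apply squeeze_zero_norm' ?_ hGlim
  filter_upwards [hev] with z hz
  have hzpos : 0 < ‖z‖ := by linarith
  have hzr : r < ‖z‖ := by linarith
  set q : ℝ := 2 * r / ‖z‖ with hq
  have hq0 : 0 ≤ q := by positivity
  have hq2 : q ≤ 1 / 2 := by
    rw [hq, div_le_div_iff₀ hzpos (by norm_num)]
    linarith
  have hq1 : q < 1 := by linarith
  have hgeo : HasSum (fun k : ℕ => C * q ^ (k + 1)) (C * q * (1 - q)⁻¹) := by
    have h3 := (hasSum_geometric_of_lt_one hq0 hq1).mul_left (C * q)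
    convert h3 using 2 with k
    · rfl
    · ring
  have hterm : ∀ k : ℕ, ‖c (k + 1) / z ^ (k + 1)‖ ≤ C * q ^ (k + 1) := by
    intro k
    rw [norm_div, norm_pow, div_le_iff₀ (by positivity)]
    calc ‖c (k + 1)‖ ≤ C * (2 * r) ^ (k + 1) := hc k
      _ = C * q ^ (k + 1) * ‖z‖ ^ (k + 1) := by
          rw [hq, div_pow, mul_assoc, div_mul_cancel₀]
          positivity
  have hgz : ‖G z‖ ≤ C * q * (1 - q)⁻¹ := by
    rw [← (h z hzr).tsum_eq]
    exact tsum_of_norm_bounded hgeo hterm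
  have hinv2 : (1 - q)⁻¹ ≤ 2 := by
    rw [show (2 : ℝ) = (1/2 : ℝ)⁻¹ by norm_num]
    apply inv_anti₀ (by norm_num)
    linarith
  calc ‖G z‖ ≤ C * q * (1 - q)⁻¹ := hgz
    _ ≤ C * q * 2 := by
        apply mul_le_mul_of_nonneg_left hinv2 (by positivity)
    _ = 4 * C * r * ‖z‖⁻¹ := by
        rw [hq]
        field_simp
        ring

private lemma coeffs_eq_zero' {e : ℕ → ℂ} {r : ℝ} (hr : 0 < r)
    (h : ∀ z : ℂ, r < ‖z‖ → HasSum (fun j : ℕ => e j / z ^ (j + 1)) 0) :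
    ∀ j, e j = 0 := by
  classical
  set a : ℕ → ℂ := fun n => Nat.rec 0 (fun j _ => e j) n with ha
  have ha0 : a 0 = 0 := rfl
  have haS : ∀ j, a (j + 1) = e j := fun j => rfl
  have hz0 : r < ‖((2 * r : ℝ) : ℂ)‖ := by
    rw [Complex.norm_real, Real.norm_eq_abs, abs_of_pos (by linarith)]
    linarith
  obtain ⟨C, hC0, hC⟩ := bound_of_hasSum' (h _ hz0)
  have hc : ∀ j : ℕ, ‖e j‖ ≤ C * (2 * r) ^ (j + 1) := by
    intro j
    have h1 := hC j
    have hn2r : ‖((2 * r : ℝ) : ℂ)‖ = 2 * r := by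
      rw [Complex.norm_real, Real.norm_eq_abs, abs_of_pos (by linarith)]
    rw [norm_div, norm_pow, hn2r, div_le_iff₀ (by positivity)] at h1
    linarith
  set r' : NNReal := ⟨1 / (2 * r), by positivity⟩ with hr'
  have hr'coe : (r' : ℝ) = 1 / (2 * r) := rfl
  have hbound : ∀ nn : ℕ, ‖a nn‖ * (r' : ℝ) ^ nn ≤ C := by
    intro nn
    cases nn with
    | zero => simpa [ha0] using hC0
    | succ j =>
        rw [haS, hr'coe]
        have h1 : ‖e j‖ * (1 / (2 * r)) ^ (j + 1) ≤
            (C * (2 * r) ^ (j + 1)) * (1 / (2 * r)) ^ (j + 1) := by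
          apply mul_le_mul_of_nonneg_right (hc j) (by positivity)
        calc ‖e j‖ * (1 / (2 * r)) ^ (j + 1)
            ≤ (C * (2 * r) ^ (j + 1)) * (1 / (2 * r)) ^ (j + 1) := h1
          _ = C := by
              rw [mul_assoc, ← mul_pow, mul_one_div_cancel (by positivity : (2 * r : ℝ) ≠ 0), one_pow, mul_one]
  have hps : HasFPowerSeriesOnBall (fun _ : ℂ => (0 : ℂ))
      (FormalMultilinearSeries.ofScalars ℂ a) 0 (r' : ENNReal) := by
    constructor
    · apply FormalMultilinearSeries.le_radius_of_bound _ C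
      intro nn
      rw [FormalMultilinearSeries.ofScalars_norm]
      exact hbound nn
    · exact_mod_cast (show (0 : NNReal) < r' by
        rw [← NNReal.coe_lt_coe, hr'coe]
        positivity)
    · intro y hy
      have hy' : ‖y‖ < 1 / (2 * r) := by
        rw [EMetric.mem_ball, edist_zero_right] at hy
        have hy2 : ‖y‖₊ < r' := by exact_mod_cast hy
        rw [← hr'coe]
        exact_mod_cast hy2
      simp only [FormalMultilinearSeries.ofScalars_apply_eq]
      have hgoal : HasSum (fun nn : ℕ => a nn • y ^ nn) 0 := by
        rcases eq_or_ne y 0 with rfl | hy0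
        · have : (fun nn : ℕ => a nn • (0 : ℂ) ^ nn) = fun _ => (0 : ℂ) := by
            funext nn
            cases nn with
            | zero => simp [ha0]
            | succ j => simp
          rw [this]
          exact hasSum_zero
        · have hzinv : r < ‖y⁻¹‖ := by
            rw [norm_inv]
            have hy'' : 0 < ‖y‖ := norm_pos_iff.mpr hy0
            rw [lt_inv_comm₀ hr hy'']
            calc ‖y‖ < 1 / (2 * r) := hy'
              _ ≤ r⁻¹ := by
                  rw [one_div, inv_le_inv₀ (by positivity) hr]
                  linarith
          have h1 := h y⁻¹ hzinv
          have h2 : HasSum (fun j : ℕ => a (j + 1) • y ^ (j + 1)) 0 := by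
            convert h1 using 2 with j
            rw [haS, smul_eq_mul, inv_pow, div_eq_mul_inv, inv_inv]
          have h3 := (hasSum_nat_add_iff (f := fun nn : ℕ => a nn • y ^ nn) 1).mp h2
          simpa [ha0] using h3
      simpa using hgoal
  have hp0 : FormalMultilinearSeries.ofScalars ℂ a = 0 :=
    HasFPowerSeriesAt.eq_zero hps.hasFPowerSeriesAt
  rw [FormalMultilinearSeries.ofScalars_series_eq_zero] at hp0
  intro j
  have := congrFun hp0 (j + 1)
  rwa [haS] at this

/-- Under the `m`-th-root transform `Ψ_D(z)^m = Ψ_Ω(z^m)`, the Grunsky coefficients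
satisfy `c^D_{mn, mk} = c^Ω_{n, k}`. -/
theorem grunsky_mth_root_transform
    (m : ℕ) (hm : 1 ≤ m) (R : ℝ) (hR : 0 < R)
    (ζ : ℂ) (hζ : ζ = Complex.exp (2 * Real.pi * Complex.I / m))
    (ΨD ΨΩ : ℂ → ℂ)
    (hΨD : DifferentiableOn ℂ ΨD {z : ℂ | R < ‖z‖})
    (hsym : ∀ z : ℂ, R < ‖z‖ → ΨD (ζ * z) = ζ * ΨD z)
    (hinf : Tendsto (fun z : ℂ => ‖ΨD z‖) (comap norm atTop) atTop)
    (hΨΩ : DifferentiableOn ℂ ΨΩ {w : ℂ | R ^ m < ‖w‖})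
    (hrel : ∀ z : ℂ, R < ‖z‖ → ΨD z ^ m = ΨΩ (z ^ m))
    (n : ℕ) (hn : 1 ≤ n)
    (FD : Polynomial ℂ) (cD : ℕ → ℂ)
    (hserD : ∀ z : ℂ, R < ‖z‖ →
      HasSum (fun k : ℕ => cD (k + 1) / z ^ (k + 1)) (FD.eval (ΨD z) - z ^ (m * n)))
    (FΩ : Polynomial ℂ) (cΩ : ℕ → ℂ)
    (hserΩ : ∀ w : ℂ, R ^ m < ‖w‖ →
      HasSum (fun k : ℕ => cΩ (k + 1) / w ^ (k + 1)) (FΩ.eval (ΨΩ w) - w ^ n)) :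
    ∀ k : ℕ, 1 ≤ k → cD (m * k) = cΩ k := by
  classical
  have hm0 : m ≠ 0 := by omega
  set d : ℕ → ℂ := fun i => if m ∣ i then cΩ (i / m) else 0 with hd_def
  -- the Ω series, rewritten as a series in z
  have hd : ∀ z : ℂ, R < ‖z‖ → HasSum (fun j : ℕ => d (j + 1) / z ^ (j + 1))
      (FΩ.eval (ΨΩ (z ^ m)) - z ^ (m * n)) := by
    intro z hz
    have hzm : R ^ m < ‖z ^ m‖ := by
      rw [norm_pow]
      exact pow_lt_pow_left₀ hz (le_of_lt hR) hm0
    have hw := hserΩ (z ^ m) hzm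
    rw [← pow_mul] at hw
    have hinj : Function.Injective fun k : ℕ => m * k + (m - 1) := by
      intro a b hab
      simp only at hab
      have h1 : m * a = m * b := Nat.add_right_cancel hab
      exact Nat.eq_of_mul_eq_mul_left (Nat.pos_of_ne_zero hm0) h1
    have hoff : ∀ j : ℕ, j ∉ Set.range (fun k : ℕ => m * k + (m - 1)) →
        d (j + 1) / z ^ (j + 1) = 0 := by
      intro j hj
      have hdj : d (j + 1) = 0 := by
        rw [hd_def]
        simp only
        rw [if_neg]
        intro hdvd
        obtain ⟨t, ht⟩ := hdvd
        have ht0 : t ≠ 0 := by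
          rintro rfl
          omega
        obtain ⟨s, rfl⟩ : ∃ s, t = s + 1 := ⟨t - 1, (Nat.succ_pred_eq_of_pos
          (Nat.pos_of_ne_zero ht0)).symm⟩
        apply hj
        refine ⟨s, ?_⟩
        simp only
        rw [Nat.mul_succ] at ht
        set p := m * s with hp
        omega
      rw [hdj, zero_div]
    have hcomp : ((fun j : ℕ => d (j + 1) / z ^ (j + 1)) ∘ (fun k : ℕ => m * k + (m - 1)))
        = fun k : ℕ => cΩ (k + 1) / z ^ (m * (k + 1)) := by
      funext k
      simp only [Function.comp]
      have hidx : m * k + (m - 1) + 1 = m * (k + 1) := by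
        rw [Nat.mul_succ]
        omega
      rw [hidx, hd_def]
      simp only
      rw [if_pos ⟨k + 1, rfl⟩, Nat.mul_div_cancel_left _ (Nat.pos_of_ne_zero hm0)]
    have hw' : HasSum (fun k : ℕ => cΩ (k + 1) / z ^ (m * (k + 1)))
        (FΩ.eval (ΨΩ (z ^ m)) - z ^ (m * n)) := by
      convert hw using 2 with k
      rw [pow_mul]
    rw [← (Function.Injective.hasSum_iff hinj hoff)]
    rw [hcomp]
    exact hw'
  -- Step 1: the polynomial identity
  set P : Polynomial ℂ := FD - FΩ.comp (Polynomial.X ^ m) with hP_def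
  have hPeval : ∀ z : ℂ, R < ‖z‖ → P.eval (ΨD z) =
      (FD.eval (ΨD z) - z ^ (m * n)) - (FΩ.eval (ΨΩ (z ^ m)) - z ^ (m * n)) := by
    intro z hz
    rw [hP_def]
    rw [Polynomial.eval_sub, Polynomial.eval_comp, Polynomial.eval_pow, Polynomial.eval_X,
      hrel z hz]
    ring
  have hA := tail_tendsto_zero' hR (fun z : ℂ => FD.eval (ΨD z) - z ^ (m * n)) hserD
  have hB := tail_tendsto_zero' hR (fun z : ℂ => FΩ.eval (ΨΩ (z ^ m)) - z ^ (m * n)) hd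
  have hP0 : Tendsto (fun z : ℂ => P.eval (ΨD z)) (comap norm atTop) (nhds 0) := by
    have h1 : Tendsto (fun z : ℂ => (FD.eval (ΨD z) - z ^ (m * n)) -
        (FΩ.eval (ΨΩ (z ^ m)) - z ^ (m * n))) (comap norm atTop) (nhds 0) := by
      simpa using hA.sub hB
    have hev : ∀ᶠ z : ℂ in comap norm atTop, R < ‖z‖ :=
      tendsto_comap.eventually (eventually_gt_atTop R)
    apply h1.congr'
    exact hev.mono fun z hz => (hPeval z hz).symm
  haveI : (comap (norm : ℂ → ℝ) atTop).NeBot := by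
    rw [comap_norm_atTop]
    infer_instance
  have hP : P = 0 := by
    by_contra hne
    rcases lt_or_ge 0 P.degree with hdeg | hdeg
    · have h1 : Tendsto (fun z : ℂ => ‖P.eval (ΨD z)‖) (comap norm atTop) atTop :=
        P.tendsto_norm_atTop hdeg hinf
      have h2 : Tendsto (fun z : ℂ => ‖P.eval (ΨD z)‖) (comap norm atTop) (nhds 0) := by
        simpa using hP0.norm
      exact absurd h2 (h1.not_tendsto ((disjoint_nhds_atTop (0 : ℝ)).symm))
    · have hc : P = Polynomial.C (P.coeff 0) := Polynomial.eq_C_of_degree_le_zero hdeg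
      have h1 : Tendsto (fun _ : ℂ => P.coeff 0) (comap norm atTop) (nhds 0) := by
        have := hP0
        rw [hc] at this
        simpa using this
      have h0 : P.coeff 0 = 0 := (tendsto_nhds_unique h1 tendsto_const_nhds).symm
      exact hne (by rw [hc, h0, map_zero])
  have key : ∀ z : ℂ, R < ‖z‖ →
      FD.eval (ΨD z) - z ^ (m * n) = FΩ.eval (ΨΩ (z ^ m)) - z ^ (m * n) := by
    intro z hz
    have h1 := hPeval z hz
    rw [hP, Polynomial.eval_zero] at h1
    linear_combination -h1
  -- Step 2: coefficient comparison
  have hzero : ∀ j : ℕ, cD (j + 1) - d (j + 1) = 0 := by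
    apply coeffs_eq_zero' hR
    intro z hz
    have h1 := hserD z hz
    have h2 := hd z hz
    have h3 := h1.sub h2
    rw [key z hz, sub_self] at h3
    convert h3 using 2 with j
    · rfl
    · rw [sub_div]
  intro k hk
  have h := hzero (m * k - 1)
  have hmk : m * k - 1 + 1 = m * k :=
    Nat.succ_pred_eq_of_pos (Nat.mul_pos (Nat.pos_of_ne_zero hm0) (by omega))
  rw [hmk] at h
  have hdmk : d (m * k) = cΩ k := by
    rw [hd_def]
    simp only
    rw [if_pos ⟨k, rfl⟩, Nat.mul_div_cancel_left _ (Nat.pos_of_ne_zero hm0)]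
  rw [hdmk] at h
  exact sub_eq_zero.mp h
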